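/- (Corollary 2.11, cocycle part) If C is a 2-cocycle of 𝔤, then the alternating trilinear map Sq(C) defined by Sq(C)(X,Y,Z) = C(C(X,Y),Z) + C(C(Y,Z),X) + C(C(Z,X),Y) is a 3-cocycle of 𝔤. -/

import Mathlib

variable {V : Type*} [LieRing V]

/-- The Chevalley–Eilenberg differential with coefficients in the adjoint representation,
defined on raw `r`-cochains `(Fin r → V) → V` (0-based indices). -/
def ceDiff : ∀ (r : ℕ), ((Fin r → V) → V) → (Fin (r + 1) → V) → V
  | 0, f => fun X => ⁅X 0, f Fin.elim0⁆
  | (r + 1), f => fun X =>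
      (∑ i : Fin (r + 2), (-1 : ℤ) ^ (i : ℕ) • ⁅X i, f (X ∘ i.succAbove)⁆) +
        ∑ i : Fin (r + 2), ∑ j : Fin (r + 2),
          if h : i < j then
            (-1 : ℤ) ^ ((i : ℕ) + (j : ℕ)) •
              f (Fin.cons ⁅X i, X j⁆
                  ((X ∘ j.succAbove) ∘
                    Fin.succAbove
                      ⟨(i : ℕ), lt_of_lt_of_le (Fin.lt_def.mp h) (Nat.lt_succ_iff.mp j.isLt)⟩))
          else 0

set_option linter.unusedSectionVars false
set_option maxHeartbeats 1000000
section Aux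
variable {k : Type*} [Field k] [CharZero k] [LieAlgebra k V]
variable (C : AlternatingMap k V V (Fin 2))

private lemma upd2_0 (p q v : V) : Function.update ![p, q] 0 v = ![v, q] := by
  funext i; fin_cases i <;> simp

private lemma upd2_1 (p q v : V) : Function.update ![p, q] 1 v = ![p, v] := by
  funext i; fin_cases i <;> simp

lemma c_add_left (a b u : V) : C ![a + b, u] = C ![a, u] + C ![b, u] := by
  have h := C.map_update_add ![a, u] 0 a b
  rwa [upd2_0, upd2_0, upd2_0] at h

lemma c_add_right (u a b : V) : C ![u, a + b] = C ![u, a] + C ![u, b] := by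
  have h := C.map_update_add ![u, a] 1 a b
  rwa [upd2_1, upd2_1, upd2_1] at h

lemma c_smul_left (s : k) (a u : V) : C ![s • a, u] = s • C ![a, u] := by
  have h := C.map_update_smul ![a, u] 0 s a
  rwa [upd2_0, upd2_0] at h

lemma c_smul_right (s : k) (u a : V) : C ![u, s • a] = s • C ![u, a] := by
  have h := C.map_update_smul ![u, a] 1 s a
  rwa [upd2_1, upd2_1] at h

lemma c_same (a : V) : C ![a, a] = 0 :=
  C.map_eq_zero_of_eq ![a, a] (i := 0) (j := 1) rfl (by decide)

lemma c_zero_left (u : V) : C ![0, u] = 0 :=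
  C.map_coord_zero 0 rfl

lemma c_neg_left (a u : V) : C ![-a, u] = -C ![a, u] := by
  have h := c_add_left C a (-a) u
  simp only [add_neg_cancel, c_zero_left] at h
  exact eq_neg_of_add_eq_zero_right h.symm

lemma c_zero_right (u : V) : C ![u, 0] = 0 :=
  C.map_coord_zero 1 rfl

lemma c_neg_right (u a : V) : C ![u, -a] = -C ![u, a] := by
  have h := c_add_right C u a (-a)
  rw [add_neg_cancel, c_zero_right] at h
  exact eq_neg_of_add_eq_zero_right h.symm

lemma c_sub_left (a b u : V) : C ![a - b, u] = C ![a, u] - C ![b, u] := by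
  rw [sub_eq_add_neg, c_add_left, c_neg_left, ← sub_eq_add_neg]

lemma c_six {t1 t2 t3 t4 t5 t6 : V} (u : V) (h : t1 - t2 + t3 - t4 + t5 - t6 = 0) :
    C ![t1, u] - C ![t2, u] + C ![t3, u] - C ![t4, u] + C ![t5, u] - C ![t6, u] = 0 := by
  rw [← c_sub_left, ← c_add_left, ← c_sub_left, ← c_add_left, ← c_sub_left, h, c_zero_left]

lemma c_swap (a b : V) : C ![a, b] = -C ![b, a] := by
  have h := C.map_swap (v := ![b, a]) (i := 0) (j := 1) (by decide)
  rw [show (![b, a] ∘ Equiv.swap (0:Fin 2) 1) = ![a, b] from by funext i; fin_cases i <;> simp] at h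
  exact h

def sqG : AlternatingMap k V V (Fin 3) where
  toFun := fun X => C ![C ![X 0, X 1], X 2] + C ![C ![X 1, X 2], X 0] + C ![C ![X 2, X 0], X 1]
  map_update_add' := by
    intro _ m i x y
    fin_cases i <;>
      simp [Function.update_apply, Fin.ext_iff, c_add_left, c_add_right] <;> abel
  map_update_smul' := by
    intro _ m i s x
    fin_cases i <;>
      simp [Function.update_apply, Fin.ext_iff, c_smul_left, c_smul_right, smul_add] <;> abel
  map_eq_zero_of_eq' := by
    intro v i j hv hij
    fin_cases i <;> fin_cases j <;> simp_all [Fin.ext_iff] <;>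
      (try rw [c_same, c_zero_left]) <;>
      (first
        | (rw [c_swap C (v 0) (v 1), c_neg_left]; abel)
        | (rw [c_swap C (v 0) (v 2), c_neg_left]; abel)
        | (rw [c_swap C (v 1) (v 0), c_neg_left]; abel)
        | (rw [c_swap C (v 2) (v 0), c_neg_left]; abel)
        | (rw [c_swap C (v 1) (v 2), c_neg_left]; abel)
        | (rw [c_swap C (v 2) (v 1), c_neg_left]; abel))

end Aux

/-- Corollary 2.11, cocycle part: if `C` is a 2-cocycle of `𝔤`, then the
alternating trilinear map `Sq(C)(X,Y,Z) = C(C(X,Y),Z) + C(C(Y,Z),X) + C(C(Z,X),Y)` is a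
3-cocycle of `𝔤`. -/
theorem sq_of_two_cocycle_is_three_cocycle
    {k : Type*} [Field k] [CharZero k] [LieAlgebra k V] [FiniteDimensional k V]
    (C : AlternatingMap k V V (Fin 2)) (hC : ceDiff 2 ⇑C = 0) :
    ∃ G : AlternatingMap k V V (Fin 3),
      (∀ X : Fin 3 → V,
        G X = C ![C ![X 0, X 1], X 2] + C ![C ![X 1, X 2], X 0] + C ![C ![X 2, X 0], X 1]) ∧
      ceDiff 3 ⇑G = 0 := by
  have H : ∀ x y z : V, ⁅x, C ![y,z]⁆ - ⁅y, C ![x,z]⁆ + ⁅z, C ![x,y]⁆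
      - C ![⁅x,y⁆, z] + C ![⁅x,z⁆, y] - C ![⁅y,z⁆, x] = 0 := by
    intro x y z
    have h := congrFun hC ![x,y,z]
    simp only [ceDiff, Fin.sum_univ_succ, Fin.sum_univ_zero] at h
    norm_num [Fin.lt_def, Fin.ext_iff] at h
    rw [show (![x,y,z] ∘ Fin.succ) = ![y,z] from by funext i; fin_cases i <;> rfl,
        show (![x,y,z] ∘ Fin.succAbove 1) = ![x,z] from by funext i; fin_cases i <;> rfl,
        show (![x,y,z] ∘ Fin.succAbove 2) = ![x,y] from by funext i; fin_cases i <;> rfl,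
        show (Fin.cons ⁅x, y⁆ (![x, z] ∘ Fin.succ) : Fin 2 → V) = ![⁅x,y⁆, z] from by funext i; fin_cases i <;> rfl,
        show ![x,y,z] 2 = z from rfl,
        show (Fin.cons ⁅x, z⁆ (![x, y] ∘ Fin.succ) : Fin 2 → V) = ![⁅x,z⁆, y] from by funext i; fin_cases i <;> rfl,
        show (Fin.cons ⁅y, z⁆ (![x, y] ∘ Fin.succAbove 1) : Fin 2 → V) = ![⁅y,z⁆, x] from by funext i; fin_cases i <;> rfl] at h
    rw [← lie_skew (C ![x,z]) y] at h
    abel_nf at h ⊢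
    exact h
  refine ⟨sqG C, fun X => rfl, ?_⟩
  funext X
  show ceDiff 3 (⇑(sqG C)) X = 0
  have hG : ∀ Y : Fin 3 → V, sqG C Y
      = C ![C ![Y 0, Y 1], Y 2] + C ![C ![Y 1, Y 2], Y 0] + C ![C ![Y 2, Y 0], Y 1] :=
    fun Y => rfl
  simp only [ceDiff, Fin.sum_univ_succ, Fin.sum_univ_zero]
  norm_num [Fin.lt_def, Fin.ext_iff]
  rw [show (X ∘ Fin.succ) = ![X 1, X 2, X 3] from by funext i; fin_cases i <;> rfl,
      show (X ∘ Fin.succAbove 1) = ![X 0, X 2, X 3] from by funext i; fin_cases i <;> rfl,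
      show (X ∘ Fin.succAbove 2) = ![X 0, X 1, X 3] from by funext i; fin_cases i <;> rfl,
      show (X ∘ (Fin.succ 2).succAbove) = ![X 0, X 1, X 2] from by funext i; fin_cases i <;> rfl,
      show X (Fin.succ 2) = X 3 from rfl]
  rw [show (Fin.cons ⁅X 0, X 1⁆ (![X 0, X 2, X 3] ∘ Fin.succ) : Fin 3 → V) = ![⁅X 0, X 1⁆, X 2, X 3] from by funext i; fin_cases i <;> rfl,
      show (Fin.cons ⁅X 0, X 2⁆ (![X 0, X 1, X 3] ∘ Fin.succ) : Fin 3 → V) = ![⁅X 0, X 2⁆, X 1, X 3] from by funext i; fin_cases i <;> rfl,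
      show (Fin.cons ⁅X 0, X 3⁆ (![X 0, X 1, X 2] ∘ Fin.succ) : Fin 3 → V) = ![⁅X 0, X 3⁆, X 1, X 2] from by funext i; fin_cases i <;> rfl,
      show (Fin.cons ⁅X 1, X 2⁆ (![X 0, X 1, X 3] ∘ Fin.succAbove 1) : Fin 3 → V) = ![⁅X 1, X 2⁆, X 0, X 3] from by funext i; fin_cases i <;> rfl,
      show (Fin.cons ⁅X 1, X 3⁆ (![X 0, X 1, X 2] ∘ Fin.succAbove 1) : Fin 3 → V) = ![⁅X 1, X 3⁆, X 0, X 2] from by funext i; fin_cases i <;> rfl,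
      show (Fin.cons ⁅X 2, X 3⁆ (![X 0, X 1, X 2] ∘ Fin.succAbove (⟨2, by omega⟩ : Fin 3)) : Fin 3 → V) = ![⁅X 2, X 3⁆, X 0, X 1] from by funext i; fin_cases i <;> rfl]
  simp only [hG, Matrix.cons_val_zero, Matrix.cons_val_one, Matrix.head_cons,
    Matrix.cons_val_two, Matrix.tail_cons, lie_add, add_lie]
  have hsk1 : ⁅C ![C ![X 0, X 1], X 2], X 3⁆ = -(⁅X 3, C ![C ![X 0, X 1], X 2]⁆) := by
    simp only [(lie_skew (C ![C ![X 0, X 1], X 2]) (X 3)).symm, c_neg_left, c_neg_right, lie_neg, neg_lie, neg_neg]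
  have hsk2 : ⁅C ![C ![X 2, X 0], X 1], X 3⁆ = ⁅X 3, C ![C ![X 0, X 2], X 1]⁆ := by
    simp only [c_swap C (X 2) (X 0), (lie_skew (C ![C ![X 0, X 2], X 1]) (X 3)).symm, c_neg_left, c_neg_right, lie_neg, neg_lie, neg_neg]
  have hsk3 : ⁅C ![C ![X 0, X 2], X 3], X 1⁆ = -(⁅X 1, C ![C ![X 0, X 2], X 3]⁆) := by
    simp only [(lie_skew (C ![C ![X 0, X 2], X 3]) (X 1)).symm, c_neg_left, c_neg_right, lie_neg, neg_lie, neg_neg]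
  have hsk4 : ⁅X 2, C ![C ![X 3, X 0], X 1]⁆ = -(⁅X 2, C ![C ![X 0, X 3], X 1]⁆) := by
    simp only [c_swap C (X 3) (X 0), c_neg_left, c_neg_right, lie_neg, neg_lie, neg_neg]
  have hsk5 : ⁅C ![C ![X 3, X 0], X 2], X 1⁆ = ⁅X 1, C ![C ![X 0, X 3], X 2]⁆ := by
    simp only [c_swap C (X 3) (X 0), (lie_skew (C ![C ![X 0, X 3], X 2]) (X 1)).symm, c_neg_left, c_neg_right, lie_neg, neg_lie, neg_neg]
  have hsk6 : ⁅C ![C ![X 1, X 2], X 0], X 3⁆ = -(⁅X 3, C ![C ![X 1, X 2], X 0]⁆) := by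
    simp only [(lie_skew (C ![C ![X 1, X 2], X 0]) (X 3)).symm, c_neg_left, c_neg_right, lie_neg, neg_lie, neg_neg]
  have hsk7 : ⁅X 0, C ![C ![X 3, X 1], X 2]⁆ = -(⁅X 0, C ![C ![X 1, X 3], X 2]⁆) := by
    simp only [c_swap C (X 3) (X 1), c_neg_left, c_neg_right, lie_neg, neg_lie, neg_neg]
  have hsk8 : ⁅C ![C ![X 2, X 3], X 0], X 1⁆ = -(⁅X 1, C ![C ![X 2, X 3], X 0]⁆) := by
    simp only [(lie_skew (C ![C ![X 2, X 3], X 0]) (X 1)).symm, c_neg_left, c_neg_right, lie_neg, neg_lie, neg_neg]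
  have hsk9 : ⁅C ![X 0, X 1], C ![X 2, X 3]⁆ = -(⁅C ![X 2, X 3], C ![X 0, X 1]⁆) := by
    simp only [(lie_skew (C ![X 0, X 1]) (C ![X 2, X 3])).symm, c_neg_left, c_neg_right, lie_neg, neg_lie, neg_neg]
  have hsk10 : ⁅C ![X 0, X 2], C ![X 1, X 3]⁆ = -(⁅C ![X 1, X 3], C ![X 0, X 2]⁆) := by
    simp only [(lie_skew (C ![X 0, X 2]) (C ![X 1, X 3])).symm, c_neg_left, c_neg_right, lie_neg, neg_lie, neg_neg]
  have hsk11 : ⁅C ![X 0, X 3], C ![X 1, X 2]⁆ = -(⁅C ![X 1, X 2], C ![X 0, X 3]⁆) := by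
    simp only [(lie_skew (C ![X 0, X 3]) (C ![X 1, X 2])).symm, c_neg_left, c_neg_right, lie_neg, neg_lie, neg_neg]
  have hsk12 : C ![⁅C ![X 0, X 1], X 2⁆, X 3] = -(C ![⁅X 2, C ![X 0, X 1]⁆, X 3]) := by
    simp only [(lie_skew (C ![X 0, X 1]) (X 2)).symm, c_neg_left, c_neg_right, lie_neg, neg_lie, neg_neg]
  have hsk13 : C ![⁅C ![X 0, X 1], X 3⁆, X 2] = -(C ![⁅X 3, C ![X 0, X 1]⁆, X 2]) := by
    simp only [(lie_skew (C ![X 0, X 1]) (X 3)).symm, c_neg_left, c_neg_right, lie_neg, neg_lie, neg_neg]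
  have hsk14 : C ![⁅C ![X 0, X 2], X 1⁆, X 3] = -(C ![⁅X 1, C ![X 0, X 2]⁆, X 3]) := by
    simp only [(lie_skew (C ![X 0, X 2]) (X 1)).symm, c_neg_left, c_neg_right, lie_neg, neg_lie, neg_neg]
  have hsk15 : C ![⁅C ![X 0, X 2], X 3⁆, X 1] = -(C ![⁅X 3, C ![X 0, X 2]⁆, X 1]) := by
    simp only [(lie_skew (C ![X 0, X 2]) (X 3)).symm, c_neg_left, c_neg_right, lie_neg, neg_lie, neg_neg]
  have hsk16 : C ![⁅C ![X 0, X 3], X 1⁆, X 2] = -(C ![⁅X 1, C ![X 0, X 3]⁆, X 2]) := by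
    simp only [(lie_skew (C ![X 0, X 3]) (X 1)).symm, c_neg_left, c_neg_right, lie_neg, neg_lie, neg_neg]
  have hsk17 : C ![⁅C ![X 0, X 3], X 2⁆, X 1] = -(C ![⁅X 2, C ![X 0, X 3]⁆, X 1]) := by
    simp only [(lie_skew (C ![X 0, X 3]) (X 2)).symm, c_neg_left, c_neg_right, lie_neg, neg_lie, neg_neg]
  have hsk18 : C ![⁅C ![X 1, X 2], X 0⁆, X 3] = -(C ![⁅X 0, C ![X 1, X 2]⁆, X 3]) := by
    simp only [(lie_skew (C ![X 1, X 2]) (X 0)).symm, c_neg_left, c_neg_right, lie_neg, neg_lie, neg_neg]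
  have hsk19 : C ![⁅C ![X 1, X 2], X 3⁆, X 0] = -(C ![⁅X 3, C ![X 1, X 2]⁆, X 0]) := by
    simp only [(lie_skew (C ![X 1, X 2]) (X 3)).symm, c_neg_left, c_neg_right, lie_neg, neg_lie, neg_neg]
  have hsk20 : C ![⁅C ![X 1, X 3], X 0⁆, X 2] = -(C ![⁅X 0, C ![X 1, X 3]⁆, X 2]) := by
    simp only [(lie_skew (C ![X 1, X 3]) (X 0)).symm, c_neg_left, c_neg_right, lie_neg, neg_lie, neg_neg]
  have hsk21 : C ![⁅C ![X 1, X 3], X 2⁆, X 0] = -(C ![⁅X 2, C ![X 1, X 3]⁆, X 0]) := by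
    simp only [(lie_skew (C ![X 1, X 3]) (X 2)).symm, c_neg_left, c_neg_right, lie_neg, neg_lie, neg_neg]
  have hsk22 : C ![⁅C ![X 2, X 3], X 0⁆, X 1] = -(C ![⁅X 0, C ![X 2, X 3]⁆, X 1]) := by
    simp only [(lie_skew (C ![X 2, X 3]) (X 0)).symm, c_neg_left, c_neg_right, lie_neg, neg_lie, neg_neg]
  have hsk23 : C ![⁅C ![X 2, X 3], X 1⁆, X 0] = -(C ![⁅X 1, C ![X 2, X 3]⁆, X 0]) := by
    simp only [(lie_skew (C ![X 2, X 3]) (X 1)).symm, c_neg_left, c_neg_right, lie_neg, neg_lie, neg_neg]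
  have hsk24 : C ![C ![X 2, X 3], ⁅X 0, X 1⁆] = -(C ![⁅X 0, X 1⁆, C ![X 2, X 3]]) := by
    simp only [c_swap C (C ![X 2, X 3]) (⁅X 0, X 1⁆), c_neg_left, c_neg_right, lie_neg, neg_lie, neg_neg]
  have hsk25 : C ![C ![X 1, X 3], ⁅X 0, X 2⁆] = -(C ![⁅X 0, X 2⁆, C ![X 1, X 3]]) := by
    simp only [c_swap C (C ![X 1, X 3]) (⁅X 0, X 2⁆), c_neg_left, c_neg_right, lie_neg, neg_lie, neg_neg]
  have hsk26 : C ![C ![X 1, X 2], ⁅X 0, X 3⁆] = -(C ![⁅X 0, X 3⁆, C ![X 1, X 2]]) := by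
    simp only [c_swap C (C ![X 1, X 2]) (⁅X 0, X 3⁆), c_neg_left, c_neg_right, lie_neg, neg_lie, neg_neg]
  have hsk27 : C ![C ![X 0, X 3], ⁅X 1, X 2⁆] = -(C ![⁅X 1, X 2⁆, C ![X 0, X 3]]) := by
    simp only [c_swap C (C ![X 0, X 3]) (⁅X 1, X 2⁆), c_neg_left, c_neg_right, lie_neg, neg_lie, neg_neg]
  have hsk28 : C ![C ![X 0, X 2], ⁅X 1, X 3⁆] = -(C ![⁅X 1, X 3⁆, C ![X 0, X 2]]) := by
    simp only [c_swap C (C ![X 0, X 2]) (⁅X 1, X 3⁆), c_neg_left, c_neg_right, lie_neg, neg_lie, neg_neg]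
  have hsk29 : C ![C ![X 0, X 1], ⁅X 2, X 3⁆] = -(C ![⁅X 2, X 3⁆, C ![X 0, X 1]]) := by
    simp only [c_swap C (C ![X 0, X 1]) (⁅X 2, X 3⁆), c_neg_left, c_neg_right, lie_neg, neg_lie, neg_neg]
  have hsk30 : C ![C ![X 3, ⁅X 0, X 1⁆], X 2] = -(C ![C ![⁅X 0, X 1⁆, X 3], X 2]) := by
    simp only [c_swap C (X 3) (⁅X 0, X 1⁆), c_neg_left, c_neg_right, lie_neg, neg_lie, neg_neg]
  have hsk31 : C ![C ![X 3, ⁅X 0, X 2⁆], X 1] = -(C ![C ![⁅X 0, X 2⁆, X 3], X 1]) := by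
    simp only [c_swap C (X 3) (⁅X 0, X 2⁆), c_neg_left, c_neg_right, lie_neg, neg_lie, neg_neg]
  have hsk32 : C ![C ![X 2, ⁅X 0, X 3⁆], X 1] = -(C ![C ![⁅X 0, X 3⁆, X 2], X 1]) := by
    simp only [c_swap C (X 2) (⁅X 0, X 3⁆), c_neg_left, c_neg_right, lie_neg, neg_lie, neg_neg]
  have hsk33 : C ![C ![X 3, ⁅X 1, X 2⁆], X 0] = -(C ![C ![⁅X 1, X 2⁆, X 3], X 0]) := by
    simp only [c_swap C (X 3) (⁅X 1, X 2⁆), c_neg_left, c_neg_right, lie_neg, neg_lie, neg_neg]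
  have hsk34 : C ![C ![X 2, ⁅X 1, X 3⁆], X 0] = -(C ![C ![⁅X 1, X 3⁆, X 2], X 0]) := by
    simp only [c_swap C (X 2) (⁅X 1, X 3⁆), c_neg_left, c_neg_right, lie_neg, neg_lie, neg_neg]
  have hsk35 : C ![C ![X 1, ⁅X 2, X 3⁆], X 0] = -(C ![C ![⁅X 2, X 3⁆, X 1], X 0]) := by
    simp only [c_swap C (X 1) (⁅X 2, X 3⁆), c_neg_left, c_neg_right, lie_neg, neg_lie, neg_neg]
  linear_combination (norm := abel1)
    - H (C ![X 0, X 1]) (X 2) (X 3)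
    + H (C ![X 0, X 2]) (X 1) (X 3)
    - H (C ![X 0, X 3]) (X 1) (X 2)
    - H (C ![X 1, X 2]) (X 0) (X 3)
    + H (C ![X 1, X 3]) (X 0) (X 2)
    - H (C ![X 2, X 3]) (X 0) (X 1)
    - c_six C (X 0) (H (X 1) (X 2) (X 3))
    + c_six C (X 1) (H (X 0) (X 2) (X 3))
    - c_six C (X 2) (H (X 0) (X 1) (X 3))
    + c_six C (X 3) (H (X 0) (X 1) (X 2))
    + hsk1
    + hsk2
    + hsk3
    + hsk4
    + hsk5
    + hsk6
    + hsk7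
    + hsk8
    + hsk9
    - hsk10
    + hsk11
    - hsk12
    + hsk13
    + hsk14
    - hsk15
    - hsk16
    + hsk17
    - hsk18
    + hsk19
    + hsk20
    - hsk21
    - hsk22
    + hsk23
    - hsk24
    + hsk25
    - hsk26
    - hsk27
    + hsk28
    - hsk29
    - hsk30
    + hsk31
    - hsk32
    - hsk33
    + hsk34
    - hsk35
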